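/- Let p be a prime, let K be the completion of the rational function field C_p(T) with respect to the Gauss norm (the multiplicative norm on C_p[T] given by |Σ a_i T^i| = max_i |a_i|), and let L = K(S) where S^p = T. Then the different of L/K equals |p|: that is, the supremum of the absolute values of elements of the annihilator of the torsion O_L-module Ω_{O_L/O_K} equals |p|, where O_K and O_L are the rings of elements of absolute value at most 1 in K and L respectively. -/

import Mathlib

/-!
STATEMENT 8: Let p be a prime, K the completion of C_p(T) with respect to the Gauss norm, and
L = K(S) with S^p = T.  Then the different of L/K equals |p|: the supremum of the absolute
values of the elements of the annihilator of Ω_{O_L/O_K} equals |p| (= 1/p).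

We model C_p as an algebraically closed field Cp of characteristic 0, equipped with a
non-archimedean absolute value v with v(p) = 1/p for which Cp is (sequentially) complete; K is
a field extension of Cp with a non-archimedean absolute value w extending v, containing an
element T for which w restricts to the Gauss norm on polynomials in T (|Σ aᵢTⁱ| = maxᵢ |aᵢ|),
such that K is (sequentially) complete and Cp(T) is dense in K; and L = K(S) where S^p = T,
equipped with a non-archimedean absolute value w' extending w.  The rings of integers O_K, O_L
are the unit balls of w, w', and O_L is an O_K-algebra via the inclusion.
-/

/-- The unit ball of a non-archimedean absolute value on a field, as a subring. -/
def unitBall {F : Type*} [Field F] (w : AbsoluteValue F ℝ) (hw : IsNonarchimedean w) :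
    Subring F where
  carrier := {x | w x ≤ 1}
  one_mem' := by simp [w.map_one]
  mul_mem' := fun {a b} ha hb => by
    simpa [w.map_mul] using mul_le_one₀ ha (w.nonneg b) hb
  zero_mem' := by simp [w.map_zero]
  add_mem' := fun {a b} ha hb => le_trans (hw a b) (max_le ha hb)
  neg_mem' := fun {a} ha => by simpa [w.map_neg] using ha

/-- The inclusion `O_K → O_L` induced by an embedding of valued fields `K → L` whose absolute
value `w'` extends that of `K`. -/
def unitBallHom {K L : Type*} [Field K] [Field L] [Algebra K L]
    (w : AbsoluteValue K ℝ) (hw : IsNonarchimedean w)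
    (w' : AbsoluteValue L ℝ) (hw' : IsNonarchimedean w')
    (hext : ∀ x : K, w' (algebraMap K L x) = w x) :
    unitBall w hw →+* unitBall w' hw' where
  toFun x := ⟨algebraMap K L x.1, show w' _ ≤ 1 by rw [hext]; exact x.2⟩
  map_one' := Subtype.ext (map_one _)
  map_mul' x y := Subtype.ext (map_mul _ _ _)
  map_zero' := Subtype.ext (map_zero _)
  map_add' x y := Subtype.ext (map_add _ _ _)

/-- The different δ_{L/K} of an extension of non-archimedeanly valued fields: the supremum of
the absolute values of the elements of the annihilator of the O_L-module Ω_{O_L/O_K}. -/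
noncomputable def valuedDifferent {K L : Type*} [Field K] [Field L] [Algebra K L]
    (w : AbsoluteValue K ℝ) (hw : IsNonarchimedean w)
    (w' : AbsoluteValue L ℝ) (hw' : IsNonarchimedean w')
    (hext : ∀ x : K, w' (algebraMap K L x) = w x) : ℝ :=
  letI : Algebra (unitBall w hw) (unitBall w' hw') :=
    (unitBallHom w hw w' hw' hext).toAlgebra
  sSup ((fun c : unitBall w' hw' => w' c.1) ''
    ((Module.annihilator (unitBall w' hw')
      (KaehlerDifferential (unitBall w hw) (unitBall w' hw'))) : Set (unitBall w' hw')))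



open Polynomial Finset

section Nonarch
variable {F : Type*} [Field F] (w : AbsoluteValue F ℝ)

lemma na_add_eq (hw : IsNonarchimedean w) {a b : F} (h : w b < w a) : w (a + b) = w a := by
  refine le_antisymm (le_trans (hw a b) (max_le le_rfl h.le)) ?_
  have h2 : w a ≤ max (w (a + b)) (w b) := by
    simpa [w.map_neg] using hw (a + b) (-b)
  rcases le_max_iff.mp h2 with h3 | h3
  · exact h3
  · linarith

lemma na_sum_le (hw : IsNonarchimedean w) {ι : Type*} (s : Finset ι) (f : ι → F) {C : ℝ} (hC : 0 ≤ C)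
    (h : ∀ i ∈ s, w (f i) ≤ C) : w (∑ i ∈ s, f i) ≤ C := by
  classical
  induction s using Finset.cons_induction_on with
  | empty => simpa using hC
  | cons _ _ ha ih =>
    rw [Finset.sum_cons]
    refine le_trans (hw _ _) (max_le (h _ (Finset.mem_cons_self _ _)) ?_)
    exact ih fun i hi => h i (Finset.mem_cons_of_mem hi)

lemma na_sum_lt (hw : IsNonarchimedean w) {ι : Type*} (s : Finset ι) (f : ι → F) {C : ℝ} (hC : 0 < C)
    (h : ∀ i ∈ s, w (f i) < C) : w (∑ i ∈ s, f i) < C := by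
  classical
  induction s using Finset.cons_induction_on with
  | empty => simpa using hC
  | cons _ _ ha ih =>
    rw [Finset.sum_cons]
    refine lt_of_le_of_lt (hw _ _) (max_lt (h _ (Finset.mem_cons_self _ _)) ?_)
    exact ih fun i hi => h i (Finset.mem_cons_of_mem hi)

lemma na_sum_eq (hw : IsNonarchimedean w) {ι : Type*} {s : Finset ι} (f : ι → F) {j : ι} (hj : j ∈ s)
    (h : ∀ i ∈ s, i ≠ j → w (f i) < w (f j)) : w (∑ i ∈ s, f i) = w (f j) := by
  classical
  rw [← Finset.add_sum_erase s f hj]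
  rcases Finset.eq_empty_or_nonempty (s.erase j) with he | ⟨i0, hi0⟩
  · rw [he, Finset.sum_empty, add_zero]
  · have hpos : 0 < w (f j) :=
      lt_of_le_of_lt (w.nonneg _) (h i0 (Finset.mem_of_mem_erase hi0) (Finset.ne_of_mem_erase hi0))
    exact na_add_eq w hw (na_sum_lt w hw _ _ hpos fun i hi =>
      h i (Finset.mem_of_mem_erase hi) (Finset.ne_of_mem_erase hi))

lemma na_natCast (hw : IsNonarchimedean w) (n : ℕ) : w (n : F) ≤ 1 := by
  induction n with
  | zero => simp
  | succ k ih =>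
    push_cast
    exact le_trans (hw _ _) (max_le ih (le_of_eq w.map_one))

end Nonarch

open Polynomial Finset

section Gauss
variable {Cp : Type*} [Field Cp] (v : AbsoluteValue Cp ℝ)

lemma gauss_attained (f : Polynomial Cp) :
    ∃ j, (∀ i, v (f.coeff i) ≤ v (f.coeff j)) ∧ (⨆ i, v (f.coeff i)) = v (f.coeff j) := by
  classical
  have hne : (insert 0 f.support).Nonempty := ⟨0, Finset.mem_insert_self _ _⟩
  obtain ⟨j, hj, hje⟩ := Finset.exists_mem_eq_sup' hne (fun i => v (f.coeff i))
  have hle : ∀ i, v (f.coeff i) ≤ v (f.coeff j) := by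
    intro i
    by_cases hi : i ∈ insert 0 f.support
    · rw [← hje]; exact Finset.le_sup' (fun i => v (f.coeff i)) hi
    · have h0 : f.coeff i = 0 := by
        by_contra hne0
        exact hi (Finset.mem_insert_of_mem (Polynomial.mem_support_iff.mpr hne0))
      rw [h0, v.map_zero]; exact v.nonneg _
  refine ⟨j, hle, le_antisymm (ciSup_le hle)
    (le_ciSup (f := fun i => v (f.coeff i)) ⟨v (f.coeff j), ?_⟩ j)⟩
  rintro y ⟨i, rfl⟩; exact hle i

lemma top_index (f : Polynomial Cp) (hpos : 0 < ⨆ i, v (f.coeff i)) :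
    ∃ nf, v (f.coeff nf) = (⨆ i, v (f.coeff i)) ∧ (∀ i, v (f.coeff i) ≤ v (f.coeff nf)) ∧
      ∀ i, nf < i → v (f.coeff i) < v (f.coeff nf) := by
  classical
  obtain ⟨j, hle, hsup⟩ := gauss_attained v f
  have hjpos : 0 < v (f.coeff j) := hsup ▸ hpos
  have hjne : f.coeff j ≠ 0 := fun h => by simp [h] at hjpos
  set A := (f.support).filter (fun i => v (f.coeff j) ≤ v (f.coeff i)) with hA
  have hjA : j ∈ A := Finset.mem_filter.mpr ⟨Polynomial.mem_support_iff.mpr hjne, le_rfl⟩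
  have hAne : A.Nonempty := ⟨j, hjA⟩
  set nf := A.max' hAne with hnf
  have hnfA : nf ∈ A := A.max'_mem hAne
  have hnfv : v (f.coeff nf) = v (f.coeff j) :=
    le_antisymm (hle nf) (Finset.mem_filter.mp hnfA).2
  refine ⟨nf, by rw [hnfv, hsup], fun i => (hle i).trans_eq hnfv.symm, fun i hi => ?_⟩
  rcases lt_or_ge (v (f.coeff i)) (v (f.coeff nf)) with h | h
  · exact h
  · exfalso
    have hvi : v (f.coeff j) ≤ v (f.coeff i) := hnfv ▸ h
    have hine : f.coeff i ≠ 0 := by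
      intro h0; rw [h0, v.map_zero] at hvi; linarith
    have hiA : i ∈ A := Finset.mem_filter.mpr ⟨Polynomial.mem_support_iff.mpr hine, hvi⟩
    exact absurd (A.le_max' i hiA) (not_le.mpr hi)

lemma ctrl_mul (hv : IsNonarchimedean v) {f g : Polynomial Cp} {M M' : ℝ} {nf ng : ℕ}
    (hM : 0 < M) (hM' : 0 < M')
    (hf1 : v (f.coeff nf) = M) (hf2 : ∀ i, v (f.coeff i) ≤ M) (hf3 : ∀ i, nf < i → v (f.coeff i) < M)
    (hg1 : v (g.coeff ng) = M') (hg2 : ∀ i, v (g.coeff i) ≤ M') (hg3 : ∀ i, ng < i → v (g.coeff i) < M') :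
    v ((f * g).coeff (nf + ng)) = M * M' ∧ (∀ l, v ((f * g).coeff l) ≤ M * M') ∧
      ∀ l, nf + ng < l → v ((f * g).coeff l) < M * M' := by
  classical
  have hbound : ∀ a b : ℕ, v (f.coeff a * g.coeff b) ≤ M * M' := fun a b => by
    rw [v.map_mul]
    exact mul_le_mul (hf2 a) (hg2 b) (v.nonneg _) hM.le
  have hMM' : 0 < M * M' := mul_pos hM hM'
  have hstrict : ∀ a b : ℕ, (nf + ng < a + b ∨ (a + b = nf + ng ∧ (a, b) ≠ (nf, ng))) →
      v (f.coeff a * g.coeff b) < M * M' := by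
    rintro a b (hab | ⟨hab, hne⟩)
    · rw [v.map_mul]
      rcases lt_or_ge nf a with h | h
      · calc v (f.coeff a) * v (g.coeff b) ≤ v (f.coeff a) * M' :=
              mul_le_mul_of_nonneg_left (hg2 b) (v.nonneg _)
          _ < M * M' := mul_lt_mul_of_pos_right (hf3 a h) hM'
      · have : ng < b := by omega
        calc v (f.coeff a) * v (g.coeff b) ≤ M * v (g.coeff b) :=
              mul_le_mul_of_nonneg_right (hf2 a) (v.nonneg _)
          _ < M * M' := by exact (mul_lt_mul_iff_right₀ hM).mpr (hg3 b this)
    · rw [v.map_mul]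
      rcases lt_or_ge nf a with h | h
      · calc v (f.coeff a) * v (g.coeff b) ≤ v (f.coeff a) * M' :=
              mul_le_mul_of_nonneg_left (hg2 b) (v.nonneg _)
          _ < M * M' := mul_lt_mul_of_pos_right (hf3 a h) hM'
      · rcases lt_or_eq_of_le h with h' | h'
        · have hb : ng < b := by omega
          calc v (f.coeff a) * v (g.coeff b) ≤ M * v (g.coeff b) :=
                mul_le_mul_of_nonneg_right (hf2 a) (v.nonneg _)
            _ < M * M' := (mul_lt_mul_iff_right₀ hM).mpr (hg3 b hb)
        · exfalso; apply hne; have : b = ng := by omega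
          simp [h', this]
  have key : ∀ l, (f * g).coeff l = ∑ x ∈ Finset.HasAntidiagonal.antidiagonal l, f.coeff x.1 * g.coeff x.2 :=
    fun l => Polynomial.coeff_mul f g l
  refine ⟨?_, fun l => ?_, fun l hl => ?_⟩
  · rw [key]
    have hmem : ((nf, ng) : ℕ × ℕ) ∈ Finset.HasAntidiagonal.antidiagonal (nf + ng) := by
      simp [Finset.mem_antidiagonal]
    rw [na_sum_eq v hv _ hmem ?_]
    · rw [v.map_mul, hf1, hg1]
    · rintro ⟨a, b⟩ hab hne
      rw [Finset.HasAntidiagonal.mem_antidiagonal] at hab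
      have := hstrict a b (Or.inr ⟨hab, hne⟩)
      calc v (f.coeff a * g.coeff b) < M * M' := this
        _ = v (f.coeff nf * g.coeff ng) := by rw [v.map_mul, hf1, hg1]
  · rw [key]
    exact na_sum_le v hv _ _ hMM'.le fun x _ => hbound x.1 x.2
  · rw [key]
    refine na_sum_lt v hv _ _ hMM' fun x hx => ?_
    rw [Finset.HasAntidiagonal.mem_antidiagonal] at hx
    exact hstrict x.1 x.2 (Or.inl (hx ▸ hl))

lemma ctrl_pow (hv : IsNonarchimedean v) {f : Polynomial Cp} {M : ℝ} {nf : ℕ}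
    (hM : 0 < M)
    (hf1 : v (f.coeff nf) = M) (hf2 : ∀ i, v (f.coeff i) ≤ M) (hf3 : ∀ i, nf < i → v (f.coeff i) < M)
    (n : ℕ) (hn : 0 < n) :
    v ((f ^ n).coeff (n * nf)) = M ^ n ∧ (∀ l, v ((f ^ n).coeff l) ≤ M ^ n) ∧
      ∀ l, n * nf < l → v ((f ^ n).coeff l) < M ^ n := by
  induction n with
  | zero => omega
  | succ k ih =>
    rcases Nat.eq_zero_or_pos k with rfl | hk
    · simpa using ⟨hf1, hf2, hf3⟩
    · obtain ⟨ih1, ih2, ih3⟩ := ih hk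
      have := ctrl_mul v hv (pow_pos hM k) hM ih1 ih2 ih3 hf1 hf2 hf3
      rw [← pow_succ, ← pow_succ] at this
      convert this using 3 <;> ring_nf
end Gauss

open Polynomial Finset

section Rep
variable {Cp K : Type*} [Field Cp] [Field K] [Algebra Cp K]

lemma subfield_rep (T : K) :
    ∀ y ∈ Subfield.closure (Set.range (algebraMap Cp K) ∪ {T}),
      ∃ f g : Polynomial Cp, Polynomial.aeval T g ≠ 0 ∧
        y * Polynomial.aeval T g = Polynomial.aeval T f := by
  classical
  let V : Subfield K :=
    { carrier := {x | ∃ f g : Polynomial Cp, Polynomial.aeval T g ≠ 0 ∧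
        x * Polynomial.aeval T g = Polynomial.aeval T f}
      one_mem' := ⟨1, 1, by simp, by simp⟩
      zero_mem' := ⟨0, 1, by simp, by simp⟩
      mul_mem' := by
        rintro x1 x2 ⟨f1, g1, h1, e1⟩ ⟨f2, g2, h2, e2⟩
        refine ⟨f1 * f2, g1 * g2, by simp [h1, h2], ?_⟩
        rw [map_mul, map_mul]
        calc x1 * x2 * (Polynomial.aeval T g1 * Polynomial.aeval T g2)
            = (x1 * Polynomial.aeval T g1) * (x2 * Polynomial.aeval T g2) := by ring
          _ = _ := by rw [e1, e2]
      add_mem' := by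
        rintro x1 x2 ⟨f1, g1, h1, e1⟩ ⟨f2, g2, h2, e2⟩
        refine ⟨f1 * g2 + f2 * g1, g1 * g2, by simp [h1, h2], ?_⟩
        rw [map_mul, map_add, map_mul, map_mul, ← e1, ← e2]
        ring
      neg_mem' := by
        rintro x ⟨f, g, h, e⟩
        exact ⟨-f, g, h, by rw [map_neg, ← e]; ring⟩
      inv_mem' := by
        intro x hx
        obtain ⟨f, g, h, e⟩ := hx
        rcases eq_or_ne x 0 with rfl | hx0
        · exact ⟨0, 1, by simp, by simp⟩
        · refine ⟨g, f, ?_, ?_⟩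
          · rw [← e]; exact mul_ne_zero hx0 h
          · rw [← e]; field_simp
    }
  intro y hy
  have : y ∈ V := by
    refine Subfield.closure_le.mpr ?_ hy
    rintro x (⟨c, rfl⟩ | hx)
    · exact ⟨Polynomial.C c, 1, by simp, by simp⟩
    · rw [Set.mem_singleton_iff] at hx
      exact hx ▸ ⟨Polynomial.X, 1, by simp, by simp⟩
  exact this
end Rep

open Polynomial Finset

section CC
variable {Cp K : Type*} [Field Cp] [Field K] [Algebra Cp K]
  (v : AbsoluteValue Cp ℝ) (w : AbsoluteValue K ℝ) (T : K)

lemma cc (hv : IsNonarchimedean v)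
    (hGauss : ∀ f : Polynomial Cp, w (Polynomial.aeval T f) = ⨆ i, v (f.coeff i))
    {p : ℕ} (hp : p.Prime) (n : ℕ) (hn : n ≤ p) (h : ℕ → Polynomial Cp)
    (j : ℕ) (hj : j < n) :
    w (Polynomial.aeval T (h j)) ^ p ≤
      w (Polynomial.aeval T (∑ i ∈ Finset.range n, (h i) ^ p * Polynomial.X ^ i)) := by
  classical
  have hppos : 0 < p := hp.pos
  set cont : Polynomial Cp → ℝ := fun f => w (Polynomial.aeval T f) with hcont
  have hcont0 : ∀ f, 0 ≤ cont f := fun f => w.nonneg _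
  set G := ∑ i ∈ Finset.range n, (h i) ^ p * Polynomial.X ^ i with hG
  have hne : (Finset.range n).Nonempty := ⟨j, Finset.mem_range.mpr hj⟩
  set M := (Finset.range n).sup' hne (fun i => cont (h i)) with hM
  have hjM : cont (h j) ≤ M := Finset.le_sup' (fun i => cont (h i)) (Finset.mem_range.mpr hj)
  have hle_M : ∀ i < n, cont (h i) ≤ M := fun i hi => Finset.le_sup' (fun i => cont (h i)) (Finset.mem_range.mpr hi)
  rcases eq_or_lt_of_le (hcont0 (h j)) with hz | hpos0
  · -- cont (h j) = 0
    rw [show w (Polynomial.aeval T (h j)) = 0 from hz.symm, zero_pow hppos.ne']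
    exact hcont0 G
  have hMpos : 0 < M := lt_of_lt_of_le hpos0 hjM
  -- zero polynomial characterization
  have hzero : ∀ f : Polynomial Cp, cont f = 0 → f = 0 := by
    intro f h0
    obtain ⟨j', hle', hsup'⟩ := gauss_attained v f
    have : v (f.coeff j') = 0 := by rw [← hsup', ← hGauss f]; exact h0
    ext k
    have := le_trans (hle' k) this.le
    have hk : v (f.coeff k) = 0 := le_antisymm this (v.nonneg _)
    simpa using v.eq_zero.mp hk
  -- top indices
  have Htop : ∀ i : ℕ, ∃ ni : ℕ, 0 < cont (h i) →
      v ((h i).coeff ni) = cont (h i) ∧ (∀ k, v ((h i).coeff k) ≤ v ((h i).coeff ni)) ∧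
        ∀ k, ni < k → v ((h i).coeff k) < v ((h i).coeff ni) := by
    intro i
    by_cases hpos : 0 < cont (h i)
    · have hpos' : 0 < ⨆ k, v ((h i).coeff k) := by rw [← hGauss]; exact hpos
      obtain ⟨nf, h1, h2, h3⟩ := top_index v (h i) hpos'
      exact ⟨nf, fun _ => ⟨by rw [h1, ← hGauss], h2, h3⟩⟩
    · exact ⟨0, fun h' => absurd h' hpos⟩
  choose ni hni using Htop
  set s1 := (Finset.range n).filter (fun i => cont (h i) = M) with hs1
  have hs1ne : s1.Nonempty := by
    obtain ⟨i, hi, hie⟩ := Finset.exists_mem_eq_sup' hne (fun i => cont (h i))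
    exact ⟨i, Finset.mem_filter.mpr ⟨hi, hie.symm⟩⟩
  obtain ⟨istar, histar, hmax⟩ := Finset.exists_mem_eq_sup' hs1ne (fun i => p * ni i + i)
  have histar' : istar ∈ Finset.range n := (Finset.mem_filter.mp histar).1
  have histarM : cont (h istar) = M := (Finset.mem_filter.mp histar).2
  have histarn : istar < n := Finset.mem_range.mp histar'
  set m := p * ni istar + istar with hm
  -- control data for h istar
  obtain ⟨e1, e2, e3⟩ := hni istar (histarM ▸ hMpos)
  rw [histarM] at e1
  have estar := ctrl_pow v hv hMpos e1 (fun i => (e2 i).trans_eq e1)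
      (fun i hi => (e3 i hi).trans_eq e1) p hppos
  -- the main coefficient
  have hcoeffG : ∀ l, G.coeff l = ∑ i ∈ Finset.range n, ((h i) ^ p * Polynomial.X ^ i).coeff l :=
    fun l => by rw [hG]; exact Polynomial.finset_sum_coeff _ _ _
  have hmain : v (((h istar) ^ p * Polynomial.X ^ istar).coeff m) = M ^ p := by
    rw [Polynomial.coeff_mul_X_pow', if_pos (by omega : istar ≤ m)]
    have : m - istar = p * ni istar := by omega
    rw [this]
    exact estar.1
  have hothers : ∀ i ∈ Finset.range n, i ≠ istar →
      v (((h i) ^ p * Polynomial.X ^ i).coeff m) < M ^ p := by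
    intro i hi hine
    have hin : i < n := Finset.mem_range.mp hi
    rw [Polynomial.coeff_mul_X_pow']
    by_cases him : i ≤ m
    swap
    · rw [if_neg him, v.map_zero]; exact pow_pos hMpos p
    rw [if_pos him]
    rcases eq_or_lt_of_le (hcont0 (h i)) with hz | hposi
    · -- h i = 0
      rw [hzero (h i) hz.symm]
      simp [zero_pow hppos.ne', pow_pos hMpos p]
    by_cases hci : cont (h i) = M
    · -- tie case: use position
      have his1 : i ∈ s1 := Finset.mem_filter.mpr ⟨hi, hci⟩
      have hφle : p * ni i + i ≤ m := by
        rw [← hmax]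
        exact Finset.le_sup' (fun i => p * ni i + i) his1
      have hφne : p * ni i + i ≠ m := by
        intro heq
        rw [hm] at heq
        have h1 : (p * ni i + i) % p = (p * ni istar + istar) % p := by rw [heq]
        rw [Nat.mul_add_mod, Nat.mul_add_mod] at h1
        rw [Nat.mod_eq_of_lt (lt_of_lt_of_le hin hn),
          Nat.mod_eq_of_lt (lt_of_lt_of_le histarn hn)] at h1
        exact hine h1
      obtain ⟨f1, f2, f3⟩ := hni i hposi
      rw [hci] at f1
      have ei := ctrl_pow v hv hMpos f1 (fun k => (f2 k).trans_eq f1)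
        (fun k hk => (f3 k hk).trans_eq f1) p hppos
      exact ei.2.2 (m - i) (by omega)
    · -- strictly smaller content
      have hlt : cont (h i) < M := lt_of_le_of_ne (hle_M i hin) hci
      obtain ⟨f1, f2, f3⟩ := hni i hposi
      have ei := ctrl_pow v hv hposi f1 (fun k => (f2 k).trans_eq f1)
        (fun k hk => (f3 k hk).trans_eq f1) p hppos
      calc v (((h i) ^ p).coeff (m - i)) ≤ cont (h i) ^ p := ei.2.1 _
        _ < M ^ p := by
            exact pow_lt_pow_left₀ hlt (hcont0 _) hppos.ne'
  have hGm : v (G.coeff m) = M ^ p := by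
    rw [hcoeffG m, na_sum_eq v hv _ histar' (fun i hi hine => ?_), hmain]
    rw [hmain]
    exact hothers i hi hine
  -- conclude
  obtain ⟨j0, hle0, hsup0⟩ := gauss_attained v G
  calc w (Polynomial.aeval T (h j)) ^ p = cont (h j) ^ p := rfl
    _ ≤ M ^ p := pow_le_pow_left₀ (hcont0 _) hjM p
    _ = v (G.coeff m) := hGm.symm
    _ ≤ v (G.coeff j0) := hle0 m
    _ = w (Polynomial.aeval T G) := by rw [hGauss G, hsup0]
end CC

open Polynomial Finset

section KL
variable {Cp K : Type*} [Field Cp] [Field K] [Algebra Cp K]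

lemma gauss_T_eq_one (v : AbsoluteValue Cp ℝ) (w : AbsoluteValue K ℝ) (T : K)
    (hGauss : ∀ f : Polynomial Cp, w (Polynomial.aeval T f) = ⨆ i, v (f.coeff i)) :
    w T = 1 := by
  have h0 : w T = ⨆ i, v ((Polynomial.X : Polynomial Cp).coeff i) := by
    simpa using hGauss Polynomial.X
  rw [h0]
  have hle : ∀ i, v ((Polynomial.X : Polynomial Cp).coeff i) ≤ 1 := by
    intro i
    rcases eq_or_ne i 1 with rfl | hi
    · simp
    · rw [Polynomial.coeff_X, if_neg (fun h => hi h.symm)]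
      simp
  refine le_antisymm (ciSup_le hle) ?_
  have := le_ciSup (f := fun i => v ((Polynomial.X : Polynomial Cp).coeff i))
    ⟨1, by rintro y ⟨i, rfl⟩; exact hle i⟩ 1
  simpa using this

lemma key_lemma (v : AbsoluteValue Cp ℝ) (hv : IsNonarchimedean v)
    (w : AbsoluteValue K ℝ) (hw : IsNonarchimedean w)
    (T : K)
    (hGauss : ∀ f : Polynomial Cp, w (Polynomial.aeval T f) = ⨆ i, v (f.coeff i))
    (hdense : ∀ x : K, ∀ ε : ℝ, 0 < ε →
      ∃ y ∈ Subfield.closure (Set.range (algebraMap Cp K) ∪ {T}), w (x - y) < ε)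
    {p : ℕ} (hp : p.Prime) (n : ℕ) (hnp : n ≤ p)
    (b : ℕ → K) (hb : ∀ i < n, w (b i) ≤ 1) (j : ℕ) (hjn : j < n) (hbj : w (b j) = 1) :
    1 ≤ w (∑ i ∈ Finset.range n, b i ^ p * T ^ i) := by
  classical
  by_contra hcon
  push_neg at hcon
  set u := ∑ i ∈ Finset.range n, b i ^ p * T ^ i with hu
  have hwT : w T = 1 := gauss_T_eq_one v w T hGauss
  have hwTpow : ∀ i : ℕ, w (T ^ i) = 1 := fun i => by rw [map_pow, hwT, one_pow]
  -- approximations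
  have Happ : ∀ i : ℕ, ∃ y : K,
      i < n → y ∈ Subfield.closure (Set.range (algebraMap Cp K) ∪ {T}) ∧
        w (b i - y) < 1 ∧ w y ≤ 1 := by
    intro i
    by_cases hi : i < n
    · obtain ⟨y, hy1, hy2⟩ := hdense (b i) 1 one_pos
      refine ⟨y, fun _ => ⟨hy1, hy2, ?_⟩⟩
      have hyeq : y = b i + -(b i - y) := by ring
      rw [hyeq]
      exact le_trans (hw _ _) (max_le (hb i hi) (by rw [w.map_neg]; exact hy2.le))
    · exact ⟨0, fun h => absurd h hi⟩
  choose y hy using Happ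
  have hylt : ∀ i < n, w (b i - y i) < 1 := fun i hi => (hy i hi).2.1
  have hyle : ∀ i < n, w (y i) ≤ 1 := fun i hi => (hy i hi).2.2
  -- w (y j) = 1
  have hyj : w (y j) = 1 := by
    have h1 : w (-(b j - y j)) < w (b j) := by rw [w.map_neg, hbj]; exact hylt j hjn
    have h2 : y j = b j + -(b j - y j) := by ring
    rw [h2, na_add_eq w hw h1, hbj]
  -- the approximated sum is still small
  have hsmall : w (∑ i ∈ Finset.range n, y i ^ p * T ^ i) < 1 := by
    have hdiff : ∀ i ∈ Finset.range n, w ((b i ^ p - y i ^ p) * T ^ i) < 1 := by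
      intro i hi
      have hin : i < n := Finset.mem_range.mp hi
      rw [w.map_mul, hwTpow, mul_one]
      have hfac : (∑ k ∈ Finset.range p, b i ^ k * y i ^ (p - 1 - k)) * (b i - y i)
          = b i ^ p - y i ^ p := geom_sum₂_mul (b i) (y i) p
      rw [← hfac, w.map_mul]
      have hsum1 : w (∑ k ∈ Finset.range p, b i ^ k * y i ^ (p - 1 - k)) ≤ 1 := by
        refine na_sum_le w hw _ _ zero_le_one fun k _ => ?_
        rw [w.map_mul, map_pow, map_pow]
        exact mul_le_one₀ (pow_le_one₀ (w.nonneg _) (hb i hin))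
          (pow_nonneg (w.nonneg _) _) (pow_le_one₀ (w.nonneg _) (hyle i hin))
      calc w (∑ k ∈ Finset.range p, b i ^ k * y i ^ (p - 1 - k)) * w (b i - y i)
          ≤ 1 * w (b i - y i) := mul_le_mul_of_nonneg_right hsum1 (w.nonneg _)
        _ = w (b i - y i) := one_mul _
        _ < 1 := hylt i hin
    have heq : ∑ i ∈ Finset.range n, y i ^ p * T ^ i
        = u + -(∑ i ∈ Finset.range n, (b i ^ p - y i ^ p) * T ^ i) := by
      rw [hu, ← Finset.sum_neg_distrib, ← Finset.sum_add_distrib]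
      exact Finset.sum_congr rfl fun i _ => by ring
    rw [heq]
    refine lt_of_le_of_lt (hw _ _) (max_lt hcon ?_)
    rw [w.map_neg]
    exact na_sum_lt w hw _ _ one_pos hdiff
  -- representations
  have Hrep : ∀ i : ℕ, ∃ fg : Polynomial Cp × Polynomial Cp,
      Polynomial.aeval T fg.2 ≠ 0 ∧
        (i < n → y i * Polynomial.aeval T fg.2 = Polynomial.aeval T fg.1) := by
    intro i
    by_cases hi : i < n
    · obtain ⟨f, g, hg, he⟩ := subfield_rep T (y i) (hy i hi).1
      exact ⟨(f, g), hg, fun _ => he⟩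
    · exact ⟨(0, 1), by simp, fun h => absurd h hi⟩
  choose fg hfg using Hrep
  set g : Polynomial Cp := ∏ i ∈ Finset.range n, (fg i).2 with hgdef
  have hgT : Polynomial.aeval T g ≠ 0 := by
    rw [hgdef, map_prod]
    exact Finset.prod_ne_zero_iff.mpr fun i _ => (hfg i).1
  set γ := w (Polynomial.aeval T g) with hγ
  have hγpos : 0 < γ := w.pos hgT
  set F : ℕ → Polynomial Cp := fun i => (fg i).1 * ∏ k ∈ (Finset.range n).erase i, (fg k).2
    with hFdef
  have hF : ∀ i ∈ Finset.range n, y i * Polynomial.aeval T g = Polynomial.aeval T (F i) := by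
    intro i hi
    have hin : i < n := Finset.mem_range.mp hi
    rw [hFdef]
    simp only [map_mul, map_prod]
    rw [← (hfg i).2 hin]
    rw [hgdef, map_prod, ← Finset.mul_prod_erase _ _ hi]
    ring
  set G : Polynomial Cp := ∑ i ∈ Finset.range n, (F i) ^ p * Polynomial.X ^ i with hGdef
  have hgoal : (Polynomial.aeval T g) ^ p * (∑ i ∈ Finset.range n, y i ^ p * T ^ i)
      = Polynomial.aeval T G := by
    rw [hGdef, map_sum, Finset.mul_sum]
    refine Finset.sum_congr rfl fun i hi => ?_
    rw [map_mul, map_pow, map_pow, Polynomial.aeval_X, ← hF i hi]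
    ring
  have hlt : w (Polynomial.aeval T G) < γ ^ p := by
    rw [← hgoal, w.map_mul, map_pow]
    calc γ ^ p * w (∑ i ∈ Finset.range n, y i ^ p * T ^ i) < γ ^ p * 1 :=
        mul_lt_mul_of_pos_left hsmall (pow_pos hγpos p)
      _ = γ ^ p := mul_one _
  have hge : γ ^ p ≤ w (Polynomial.aeval T G) := by
    have hFj : w (Polynomial.aeval T (F j)) = γ := by
      rw [← hF j (Finset.mem_range.mpr hjn), w.map_mul, hyj, one_mul]
    have := cc v w T hv hGauss hp n hnp F j hjn
    rw [hFj] at this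
    exact this
  linarith
end KL

open Polynomial Finset

section NF

lemma na_sum_pow {F : Type*} [Field F] (w : AbsoluteValue F ℝ) (hw : IsNonarchimedean w)
    {p : ℕ} (hp : p.Prime) {ι : Type*} (s : Finset ι) (x : ι → F)
    (hx : ∀ i ∈ s, w (x i) ≤ 1) :
    ∃ E : F, w E ≤ 1 ∧ (∑ i ∈ s, x i) ^ p = ∑ i ∈ s, x i ^ p + (p : F) * E := by
  classical
  induction s using Finset.cons_induction_on with
  | empty =>
    exact ⟨0, by simp, by simp [zero_pow hp.pos.ne']⟩
  | cons a t ha ih =>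
    obtain ⟨E1, hE1, heq1⟩ := ih fun i hi => hx i (Finset.mem_cons_of_mem hi)
    have hxa : w (x a) ≤ 1 := hx a (Finset.mem_cons_self _ _)
    have hxt : w (∑ i ∈ t, x i) ≤ 1 :=
      na_sum_le w hw _ _ zero_le_one fun i hi => hx i (Finset.mem_cons_of_mem hi)
    set St := ∑ i ∈ t, x i with hSt
    have hpow := add_pow_prime_eq hp (x a) St
    set R := x a * St * ∑ k ∈ Finset.Ioo 0 p, x a ^ (k - 1) * St ^ (p - k - 1) * ((p.choose k / p : ℕ) : F) with hR
    have hRle : w R ≤ 1 := by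
      rw [hR, w.map_mul, w.map_mul]
      refine mul_le_one₀ (mul_le_one₀ hxa (w.nonneg _) hxt) (w.nonneg _) ?_
      refine na_sum_le w hw _ _ zero_le_one fun k _ => ?_
      rw [w.map_mul, w.map_mul, map_pow, map_pow]
      have h1 : w (x a) ^ (k - 1) ≤ 1 := pow_le_one₀ (w.nonneg _) hxa
      have h2 : w St ^ (p - k - 1) ≤ 1 := pow_le_one₀ (w.nonneg _) hxt
      have h3 : w (((p.choose k / p : ℕ) : F)) ≤ 1 := na_natCast w hw _
      have hk : 0 ≤ w (x a) ^ (k - 1) := pow_nonneg (w.nonneg _) _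
      have hk2 : 0 ≤ w St ^ (p - k - 1) := pow_nonneg (w.nonneg _) _
      have hk3 : 0 ≤ w (((p.choose k / p : ℕ) : F)) := w.nonneg _
      exact mul_le_one₀ (mul_le_one₀ h1 hk2 h2) hk3 h3
    refine ⟨E1 + R, le_trans (hw _ _) (max_le hE1 hRle), ?_⟩
    rw [Finset.sum_cons, Finset.sum_cons, hpow, heq1]
    ring

variable {Cp K L : Type*} [Field Cp] [Field K] [Field L] [Algebra Cp K] [Algebra K L]

lemma norm_formula (v : AbsoluteValue Cp ℝ) (hv : IsNonarchimedean v)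
    (w : AbsoluteValue K ℝ) (hw : IsNonarchimedean w)
    (w' : AbsoluteValue L ℝ) (hw' : IsNonarchimedean w')
    (hext₂ : ∀ x : K, w' (algebraMap K L x) = w x)
    (T : K)
    (hGauss : ∀ f : Polynomial Cp, w (Polynomial.aeval T f) = ⨆ i, v (f.coeff i))
    (hdense : ∀ x : K, ∀ ε : ℝ, 0 < ε →
      ∃ y ∈ Subfield.closure (Set.range (algebraMap Cp K) ∪ {T}), w (x - y) < ε)
    {p : ℕ} (hp : p.Prime) (hplt : w' ((p : ℕ) : L) < 1)
    (S : L) (hS : S ^ p = algebraMap K L T)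
    (g : Polynomial K) (hdeg : g.natDegree < p) (j : ℕ) :
    w (g.coeff j) ≤ w' (Polynomial.aeval S g) := by
  classical
  by_contra hcon
  push_neg at hcon
  have hj0 : 0 < w (g.coeff j) := lt_of_le_of_lt (w'.nonneg _) hcon
  have hjp : j < p := by
    by_contra hjge
    push_neg at hjge
    rw [Polynomial.coeff_eq_zero_of_natDegree_lt (lt_of_lt_of_le hdeg hjge), w.map_zero] at hj0
    exact lt_irrefl 0 hj0
  -- maximal coefficient
  have hne : (insert j g.support).Nonempty := ⟨j, Finset.mem_insert_self _ _⟩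
  obtain ⟨j₀, hj₀mem, hj₀eq⟩ := Finset.exists_mem_eq_sup' hne (fun i => w (g.coeff i))
  have hjle : w (g.coeff j) ≤ w (g.coeff j₀) := by
    rw [← hj₀eq]; exact Finset.le_sup' (fun i => w (g.coeff i)) (Finset.mem_insert_self _ _)
  have hM : 0 < w (g.coeff j₀) := lt_of_lt_of_le hj0 hjle
  have hle : ∀ i, w (g.coeff i) ≤ w (g.coeff j₀) := by
    intro i
    by_cases hi : i ∈ insert j g.support
    · rw [← hj₀eq]; exact Finset.le_sup' (fun i => w (g.coeff i)) hi
    · have h0 : g.coeff i = 0 := by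
        by_contra hne0
        exact hi (Finset.mem_insert_of_mem (Polynomial.mem_support_iff.mpr hne0))
      rw [h0, w.map_zero]; exact hM.le
  have hj₀p : j₀ < p := by
    rcases Finset.mem_insert.mp hj₀mem with rfl | hmem
    · exact hjp
    · exact lt_of_le_of_lt (Polynomial.le_natDegree_of_mem_supp _ hmem) hdeg
  have hj₀ne : g.coeff j₀ ≠ 0 := fun h => by rw [h, w.map_zero] at hM; exact lt_irrefl 0 hM
  -- scaled coefficients
  set b : ℕ → K := fun i => g.coeff i / g.coeff j₀ with hbdef
  have hb : ∀ i, w (b i) ≤ 1 := fun i => by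
    rw [hbdef]; simp only [map_div₀]
    exact div_le_one_of_le₀ (hle i) (w.nonneg _)
  have hbj₀ : w (b j₀) = 1 := by
    rw [hbdef]; simp only []
    rw [div_self hj₀ne, w.map_one]
  -- w' S = 1
  have hwT : w T = 1 := gauss_T_eq_one v w T hGauss
  have hwSp : w' S ^ p = 1 := by
    rw [← map_pow, hS, hext₂, hwT]
  have hwS : w' S = 1 := by
    rcases lt_trichotomy (w' S) 1 with h | h | h
    · have := pow_lt_one₀ (w'.nonneg S) h hp.pos.ne'
      rw [hwSp] at this; exact absurd this (lt_irrefl 1)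
    · exact h
    · have := one_lt_pow₀ h hp.pos.ne'
      rw [hwSp] at this; exact absurd this (lt_irrefl 1)
  -- the element z
  set z := (algebraMap K L (g.coeff j₀))⁻¹ * Polynomial.aeval S g with hzdef
  have hzlt : w' z < 1 := by
    rw [hzdef, w'.map_mul, map_inv₀, hext₂]
    rw [show (w (g.coeff j₀))⁻¹ * w' (Polynomial.aeval S g)
      < 1 ↔ w' (Polynomial.aeval S g) < w (g.coeff j₀) from ?_]
    · exact lt_of_lt_of_le hcon hjle
    · rw [inv_mul_lt_iff₀ hM, mul_one]
  have hzsum : z = ∑ i ∈ Finset.range p, algebraMap K L (b i) * S ^ i := by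
    have h1 : Polynomial.aeval S g = ∑ i ∈ Finset.range p, algebraMap K L (g.coeff i) * S ^ i := by
      rw [Polynomial.aeval_eq_sum_range' (lt_of_lt_of_le hdeg le_rfl)]
      · exact Finset.sum_congr rfl fun i _ => by rw [Algebra.smul_def]
    rw [hzdef, h1, Finset.mul_sum]
    refine Finset.sum_congr rfl fun i _ => ?_
    rw [hbdef]
    simp only []
    rw [div_eq_mul_inv, map_mul, map_inv₀]
    ring
  -- sum of p-th powers
  have hxle : ∀ i ∈ Finset.range p, w' (algebraMap K L (b i) * S ^ i) ≤ 1 := by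
    intro i _
    rw [w'.map_mul, hext₂, map_pow, hwS, one_pow, mul_one]
    exact hb i
  obtain ⟨E, hE, heq⟩ := na_sum_pow w' hw' hp (Finset.range p) _ hxle
  rw [← hzsum] at heq
  have hterm : ∀ i ∈ Finset.range p, (algebraMap K L (b i) * S ^ i) ^ p
      = algebraMap K L (b i ^ p * T ^ i) := by
    intro i _
    rw [mul_pow, ← map_pow, ← pow_mul, mul_comm i p, pow_mul, hS, ← map_pow, ← map_mul]
  rw [Finset.sum_congr rfl hterm, ← map_sum] at heq
  -- conclude smallness
  have hsmall : w (∑ i ∈ Finset.range p, b i ^ p * T ^ i) < 1 := by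
    have h2 : algebraMap K L (∑ i ∈ Finset.range p, b i ^ p * T ^ i)
        = z ^ p + -((p : L) * E) := by rw [heq]; ring
    rw [← hext₂, h2]
    refine lt_of_le_of_lt (hw' _ _) (max_lt ?_ ?_)
    · rw [map_pow]
      exact pow_lt_one₀ (w'.nonneg _) hzlt hp.pos.ne'
    · rw [w'.map_neg, w'.map_mul]
      calc w' ((p : L)) * w' E ≤ w' ((p : L)) * 1 :=
          mul_le_mul_of_nonneg_left hE (w'.nonneg _)
        _ = w' ((p : L)) := mul_one _
        _ < 1 := hplt
  have := key_lemma v hv w hw T hGauss hdense hp p le_rfl b (fun i _ => hb i) j₀ hj₀p hbj₀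
  linarith
end NF


open Polynomial Finset

set_option maxHeartbeats 4000000 in
set_option synthInstance.maxHeartbeats 200000 in
theorem different_of_pth_root_of_gauss_variable
    (p : ℕ) (hp : p.Prime)
    (Cp K L : Type*) [Field Cp] [Field K] [Field L]
    [CharZero Cp] [IsAlgClosed Cp] [Algebra Cp K] [Algebra K L]
    (v : AbsoluteValue Cp ℝ) (hv : IsNonarchimedean v)
    (w : AbsoluteValue K ℝ) (hw : IsNonarchimedean w)
    (w' : AbsoluteValue L ℝ) (hw' : IsNonarchimedean w')
    -- |p| = 1/p in C_p
    (hvp : v (p : Cp) = (p : ℝ)⁻¹)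
    -- C_p is complete
    (hCpComplete : ∀ s : ℕ → Cp,
      (∀ ε : ℝ, 0 < ε → ∃ N, ∀ m ≥ N, ∀ n ≥ N, v (s m - s n) < ε) →
      ∃ a : Cp, ∀ ε : ℝ, 0 < ε → ∃ N, ∀ n ≥ N, v (s n - a) < ε)
    -- w extends v and w' extends w
    (hext₁ : ∀ x : Cp, w (algebraMap Cp K x) = v x)
    (hext₂ : ∀ x : K, w' (algebraMap K L x) = w x)
    (T : K)
    -- w is the Gauss norm: |Σ aᵢ Tⁱ| = maxᵢ |aᵢ|
    (hGauss : ∀ f : Polynomial Cp, w (Polynomial.aeval T f) = ⨆ i, v (f.coeff i))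
    -- K is complete ...
    (hKComplete : ∀ s : ℕ → K,
      (∀ ε : ℝ, 0 < ε → ∃ N, ∀ m ≥ N, ∀ n ≥ N, w (s m - s n) < ε) →
      ∃ a : K, ∀ ε : ℝ, 0 < ε → ∃ N, ∀ n ≥ N, w (s n - a) < ε)
    -- ... and C_p(T) is dense in K, i.e. K is the completion of C_p(T) under the Gauss norm
    (hdense : ∀ x : K, ∀ ε : ℝ, 0 < ε →
      ∃ y ∈ Subfield.closure (Set.range (algebraMap Cp K) ∪ {T}), w (x - y) < ε)
    -- L = K(S) where S^p = T
    (S : L) (hS : S ^ p = algebraMap K L T)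
    (hgen : IntermediateField.adjoin K {S} = ⊤) :
    valuedDifferent w hw w' hw' hext₂ = v (p : Cp) := by
  classical
  have hppos : 0 < p := hp.pos
  have hp2 : 2 ≤ p := hp.two_le
  have hwT : w T = 1 := gauss_T_eq_one v w T hGauss
  -- |p| values
  have hwp : w ((p : ℕ) : K) = v ((p : ℕ) : Cp) := by
    rw [← map_natCast (algebraMap Cp K) p, hext₁]
  have hwp' : w' ((p : ℕ) : L) = v ((p : ℕ) : Cp) := by
    rw [← map_natCast (algebraMap K L) p, hext₂, hwp]
  have hvplt : v ((p : ℕ) : Cp) < 1 := by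
    rw [hvp]
    have h1 : (1 : ℝ) < p := by exact_mod_cast hp.one_lt
    rw [inv_lt_one_iff₀]
    right
    exact h1
  have hvpnn : 0 ≤ v ((p : ℕ) : Cp) := v.nonneg _
  have hplt : w' ((p : ℕ) : L) < 1 := by rw [hwp']; exact hvplt
  -- w' S = 1
  have hwSp : w' S ^ p = 1 := by rw [← map_pow, hS, hext₂, hwT]
  have hwS : w' S = 1 := by
    rcases lt_trichotomy (w' S) 1 with h | h | h
    · have := pow_lt_one₀ (w'.nonneg S) h hppos.ne'
      rw [hwSp] at this; exact absurd this (lt_irrefl 1)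
    · exact h
    · have := one_lt_pow₀ h hppos.ne'
      rw [hwSp] at this; exact absurd this (lt_irrefl 1)
  have hSmem : S ∈ unitBall w' hw' := le_of_eq hwS
  have hTmem : T ∈ unitBall w hw := le_of_eq hwT
  -- norm formula
  have NF : ∀ g : Polynomial K, g.natDegree < p → ∀ j,
      w (g.coeff j) ≤ w' (Polynomial.aeval S g) := fun g hg j =>
    norm_formula v hv w hw w' hw' hext₂ T hGauss hdense hp hplt S hS g hg j
  -- representation by polynomials of degree < p
  set f : Polynomial K := Polynomial.X ^ p - Polynomial.C T with hfdef
  have hmonic : f.Monic := Polynomial.monic_X_pow_sub_C T hppos.ne'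
  have hfdeg : f.natDegree = p := Polynomial.natDegree_X_pow_sub_C
  have hfne1 : f ≠ 1 := by
    intro h
    have : f.natDegree = 0 := by rw [h, Polynomial.natDegree_one]
    omega
  have hfS : Polynomial.aeval S f = 0 := by
    rw [hfdef, map_sub, map_pow, Polynomial.aeval_X, Polynomial.aeval_C, hS, sub_self]
  have hSint : IsIntegral K S := ⟨f, hmonic, by rwa [← Polynomial.aeval_def]⟩
  have hrepex : ∀ x : L, ∃ r : Polynomial K, r.natDegree < p ∧ Polynomial.aeval S r = x := by
    intro x
    have hx : x ∈ IntermediateField.adjoin K {S} := by rw [hgen]; trivial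
    have hx' : x ∈ Algebra.adjoin K {S} := by
      rw [← IntermediateField.adjoin_simple_toSubalgebra_of_isAlgebraic hSint.isAlgebraic]
      exact hx
    rw [Algebra.adjoin_singleton_eq_range_aeval] at hx'
    obtain ⟨g, hg⟩ := hx'
    refine ⟨g %ₘ f, ?_, ?_⟩
    · rw [← hfdeg]
      exact Polynomial.natDegree_modByMonic_lt g hmonic hfne1
    · rw [Polynomial.modByMonic_eq_sub_mul_div g f, map_sub, map_mul, hfS, zero_mul,
        sub_zero]
      exact hg
  have huniq : ∀ r r' : Polynomial K, r.natDegree < p → r'.natDegree < p →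
      Polynomial.aeval S r = Polynomial.aeval S r' → r = r' := by
    intro r r' h1 h2 he
    have hz : Polynomial.aeval S (r - r') = 0 := by rw [map_sub, he, sub_self]
    have hdeg : (r - r').natDegree < p :=
      lt_of_le_of_lt (Polynomial.natDegree_sub_le r r') (max_lt h1 h2)
    ext i
    have h3 := NF (r - r') hdeg i
    rw [hz, w'.map_zero] at h3
    have h4 : w ((r - r').coeff i) = 0 := le_antisymm h3 (w.nonneg _)
    have h5 : (r - r').coeff i = 0 := w.eq_zero.mp h4
    rw [Polynomial.coeff_sub] at h5
    exact sub_eq_zero.mp h5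
  choose rep hrepdeg hrepval using hrepex
  have hrepcoeff : ∀ x : L, w' x ≤ 1 → ∀ i, w ((rep x).coeff i) ≤ 1 := by
    intro x hx i
    refine le_trans (NF _ (hrepdeg x) i) ?_
    rw [hrepval x]; exact hx
  -- integral aeval bound
  have haevalle : ∀ q : Polynomial K, (∀ i, w (q.coeff i) ≤ 1) →
      w' (Polynomial.aeval S q) ≤ 1 := by
    intro q hq
    rw [Polynomial.aeval_eq_sum_range]
    refine na_sum_le w' hw' _ _ zero_le_one fun i _ => ?_
    rw [Algebra.smul_def, w'.map_mul, hext₂, map_pow, hwS, one_pow, mul_one]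
    exact hq i
  -- ring setup
  set OK := unitBall w hw with hOK
  set OL := unitBall w' hw' with hOL
  letI algKL : Algebra OK OL := (unitBallHom w hw w' hw' hext₂).toAlgebra
  -- submodule N
  set N : Submodule OL L :=
    { carrier := {x : L | w' x ≤ v ((p : ℕ) : Cp)}
      add_mem' := fun {a b} ha hb => le_trans (hw' a b) (max_le ha hb)
      zero_mem' := by simpa using hvpnn
      smul_mem' := by
        intro c x hx
        show w' (c • x) ≤ v ((p : ℕ) : Cp)
        have hcx : c • x = (c : L) * x := rfl
        rw [hcx, w'.map_mul]
        calc w' (c : L) * w' x ≤ 1 * w' x := mul_le_mul_of_nonneg_right c.2 (w'.nonneg _)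
          _ = w' x := one_mul _
          _ ≤ _ := hx } with hN
  letI modQ : Module OK (L ⧸ N) := Module.compHom _ (algebraMap OK OL)
  haveI towQ : IsScalarTower OK OL (L ⧸ N) := ⟨fun a b m => by
    show ((algebraMap OK OL a) * b) • m = (algebraMap OK OL a) • (b • m)
    rw [mul_smul]⟩
  -- the derivation
  set Dfun : L → L := fun x => Polynomial.aeval S (Polynomial.derivative (rep x)) with hDfun
  have hDfun' : ∀ x : L, Dfun x = Polynomial.aeval S (Polynomial.derivative (rep x)) :=
    fun _ => rfl
  have hrep_add : ∀ x y : L, rep (x + y) = rep x + rep y := by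
    intro x y
    refine huniq _ _ (hrepdeg _) ?_ ?_
    · exact lt_of_le_of_lt (Polynomial.natDegree_add_le _ _) (max_lt (hrepdeg x) (hrepdeg y))
    · rw [map_add, hrepval, hrepval, hrepval]
  have hDadd : ∀ x y : L, Dfun (x + y) = Dfun x + Dfun y := by
    intro x y
    rw [hDfun', hDfun', hDfun', hrep_add, map_add, map_add]
  have hrep_smulK : ∀ (a : K) (x : L),
      rep (algebraMap K L a * x) = Polynomial.C a * rep x := by
    intro a x
    refine huniq _ _ (hrepdeg _) ?_ ?_
    · exact lt_of_le_of_lt (Polynomial.natDegree_C_mul_le a _) (hrepdeg x)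
    · rw [map_mul, Polynomial.aeval_C, hrepval, hrepval]
  have hDsmulK : ∀ (a : K) (x : L),
      Dfun (algebraMap K L a * x) = algebraMap K L a * Dfun x := by
    intro a x
    rw [hDfun', hDfun', hrep_smulK, Polynomial.derivative_C_mul, map_mul, Polynomial.aeval_C]
  have hrep_one : rep 1 = 1 := by
    refine huniq _ _ (hrepdeg _) ?_ ?_
    · rw [Polynomial.natDegree_one]; omega
    · rw [map_one, hrepval]
  have hrep_S : rep S = Polynomial.X := by
    refine huniq _ _ (hrepdeg _) ?_ ?_
    · rw [Polynomial.natDegree_X]; omega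
    · rw [Polynomial.aeval_X, hrepval]
  -- Leibniz estimate
  have hleib : ∀ a b : OL, w' (Dfun ((a : L) * b) -
      ((a : L) * Dfun b + (b : L) * Dfun a)) ≤ v ((p : ℕ) : Cp) := by
    intro a b
    set r := rep (a : L) with hr
    set s := rep (b : L) with hs
    set q := (r * s) /ₘ f with hq
    have he : rep ((a : L) * (b : L)) = (r * s) %ₘ f := by
      refine huniq _ _ (hrepdeg _) ?_ ?_
      · rw [← hfdeg]
        exact Polynomial.natDegree_modByMonic_lt _ hmonic hfne1
      · rw [hrepval, Polynomial.modByMonic_eq_sub_mul_div _ f, map_sub, map_mul, map_mul,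
          hfS, zero_mul, sub_zero, hr, hs, hrepval, hrepval]
    -- q has integral coefficients
    have hrint : ∀ i, w (r.coeff i) ≤ 1 := hrepcoeff _ a.2
    have hsint : ∀ i, w (s.coeff i) ≤ 1 := hrepcoeff _ b.2
    have hlift : ∀ t : Polynomial K, (∀ i, w (t.coeff i) ≤ 1) →
        ∃ t₀ : Polynomial OK, t₀.map (Subring.subtype OK) = t := by
      intro t ht
      refine ⟨t.toSubring OK ?_, Polynomial.map_toSubring t OK _⟩
      intro c hc
      obtain ⟨n, _, rfl⟩ := Polynomial.mem_coeffs_iff.mp hc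
      exact ht n
    obtain ⟨r₀, hr₀⟩ := hlift r hrint
    obtain ⟨s₀, hs₀⟩ := hlift s hsint
    set Tk : OK := ⟨T, hTmem⟩ with hTk
    set f₀ : Polynomial OK := Polynomial.X ^ p - Polynomial.C Tk with hf₀
    have hf₀monic : f₀.Monic := Polynomial.monic_X_pow_sub_C Tk hppos.ne'
    have hf₀map : f₀.map (Subring.subtype OK) = f := by
      rw [hf₀, Polynomial.map_sub, Polynomial.map_pow, Polynomial.map_X, Polynomial.map_C]
      rfl
    have hqmap : ((r₀ * s₀) /ₘ f₀).map (Subring.subtype OK) = q := by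
      rw [Polynomial.map_divByMonic _ hf₀monic, Polynomial.map_mul, hr₀, hs₀, hf₀map]
    have hqint : ∀ i, w (q.coeff i) ≤ 1 := by
      intro i
      rw [← hqmap, Polynomial.coeff_map]
      exact (((r₀ * s₀) /ₘ f₀).coeff i).2
    have hqle : w' (Polynomial.aeval S q) ≤ 1 := haevalle q hqint
    -- the identity
    have hid : Dfun ((a : L) * b) - ((a : L) * Dfun b + (b : L) * Dfun a)
        = -(((p : ℕ) : L) * S ^ (p - 1) * Polynomial.aeval S q) := by
      have h1 : r * s = (r * s) %ₘ f + f * q := by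
        rw [hq]
        exact (Polynomial.modByMonic_add_div (r * s) f).symm
      have h2 : Polynomial.derivative (r * s)
          = Polynomial.derivative ((r * s) %ₘ f) + (Polynomial.derivative f * q
            + f * Polynomial.derivative q) := by
        conv_lhs => rw [h1]
        rw [Polynomial.derivative_add, Polynomial.derivative_mul]
      have h3 := congrArg (Polynomial.aeval S) h2
      rw [Polynomial.derivative_mul] at h3
      simp only [map_add, map_mul] at h3
      rw [hfS, zero_mul, add_zero] at h3
      have hdf : Polynomial.derivative f = Polynomial.C ((p : ℕ) : K) * Polynomial.X ^ (p - 1) := by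
        rw [hfdef, Polynomial.derivative_sub, Polynomial.derivative_C, sub_zero,
          Polynomial.derivative_X_pow]
      rw [hdf, map_mul, Polynomial.aeval_C, map_pow, Polynomial.aeval_X] at h3
      have h4 : Polynomial.aeval S (Polynomial.derivative r) = Dfun (a : L) := by
        rw [hDfun', hr]
      have h5 : Polynomial.aeval S (Polynomial.derivative s) = Dfun (b : L) := by
        rw [hDfun', hs]
      have h6 : Polynomial.aeval S (Polynomial.derivative ((r * s) %ₘ f))
          = Dfun ((a : L) * b) := by
        rw [hDfun', he]
      rw [h4, h5, h6, hrepval, hrepval] at h3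
      have hmap : algebraMap K L ((p : ℕ) : K) = ((p : ℕ) : L) := map_natCast _ _
      rw [hmap] at h3
      -- h3 : Dfun a * b + a * Dfun b = Dfun (a*b) + p * S^(p-1) * aeval q
      linear_combination -h3
    rw [hid, w'.map_neg, w'.map_mul, w'.map_mul, map_pow, hwS, one_pow, mul_one, hwp']
    calc v ((p : ℕ) : Cp) * w' (Polynomial.aeval S q) ≤ v ((p : ℕ) : Cp) * 1 :=
        mul_le_mul_of_nonneg_left hqle hvpnn
      _ = _ := mul_one _
  -- build the derivation
  set D : Derivation OK OL (L ⧸ N) :=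
    { toFun := fun x => Submodule.Quotient.mk (Dfun (x : L))
      map_add' := fun x y => by
        show Submodule.Quotient.mk (Dfun ((x : L) + y)) = _
        rw [hDadd, Submodule.Quotient.mk_add]
      map_smul' := fun a x => by
        show Submodule.Quotient.mk (Dfun ((algebraMap K L (a : K)) * x)) = _
        rw [hDsmulK]
        show _ = (algebraMap OK OL a) • Submodule.Quotient.mk (Dfun (x : L))
        rw [← Submodule.Quotient.mk_smul]
        rfl
      map_one_eq_zero' := by
        show Submodule.Quotient.mk (Dfun ((1 : OL) : L)) = 0
        have h1 : Dfun ((1 : OL) : L) = 0 := by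
          rw [hDfun', show ((1 : OL) : L) = (1 : L) from rfl, hrep_one, Polynomial.derivative_one,
            map_zero]
        rw [h1, Submodule.Quotient.mk_zero]
      leibniz' := fun a b => by
        show Submodule.Quotient.mk (Dfun ((a : L) * b))
          = a • Submodule.Quotient.mk (Dfun ((b : L))) + b • Submodule.Quotient.mk (Dfun ((a : L)))
        have hrhs : (a • Submodule.Quotient.mk (Dfun ((b : L))) :  L ⧸ N)
            + b • Submodule.Quotient.mk (Dfun ((a : L)))
            = Submodule.Quotient.mk ((a : L) * Dfun (b : L) + (b : L) * Dfun (a : L)) := by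
          rw [Submodule.Quotient.mk_add, ← Submodule.Quotient.mk_smul, ← Submodule.Quotient.mk_smul]
          rfl
        rw [hrhs, Submodule.Quotient.eq]
        exact hleib a b }
    with hD
  -- annihilator upper bound
  have hub : ∀ c : OL, c ∈ Module.annihilator OL (KaehlerDifferential OK OL) →
      w' (c : L) ≤ v ((p : ℕ) : Cp) := by
    intro c hc
    have h1 : c • (KaehlerDifferential.D OK OL ⟨S, hSmem⟩) = 0 :=
      Module.mem_annihilator.mp hc _
    have h2 := congrArg D.liftKaehlerDifferential h1
    rw [LinearMap.map_smul, map_zero, Derivation.liftKaehlerDifferential_comp_D] at h2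
    have hDS : D ⟨S, hSmem⟩ = Submodule.Quotient.mk (1 : L) := by
      show Submodule.Quotient.mk (Dfun S) = _
      rw [hDfun', hrep_S, Polynomial.derivative_X, map_one]
    rw [hDS] at h2
    have h3 : (Submodule.Quotient.mk ((c : L)) : L ⧸ N) = 0 := by
      rw [← h2, ← Submodule.Quotient.mk_smul]
      congr 1
      show (c : L) = (c : L) * 1
      rw [mul_one]
    exact (Submodule.Quotient.mk_eq_zero N).mp h3
  -- the annihilating element
  set Sl : OL := ⟨S, hSmem⟩ with hSl
  set Tk : OK := ⟨T, hTmem⟩ with hTk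
  have hSlp : Sl ^ p = algebraMap OK OL Tk := by
    apply Subtype.ext
    show S ^ p = algebraMap K L T
    exact hS
  set c₀ : OL := (p : OL) * Sl ^ (p - 1) with hc₀
  have hc0DSl : c₀ • KaehlerDifferential.D OK OL Sl = 0 := by
    have h1 := Derivation.leibniz_pow (KaehlerDifferential.D OK OL) Sl p
    rw [hSlp, Derivation.map_algebraMap] at h1
    rw [hc₀, mul_smul, Nat.cast_smul_eq_nsmul, ← h1]
  have hpoly : ∀ q₀ : Polynomial OK,
      c₀ • KaehlerDifferential.D OK OL (Polynomial.aeval Sl q₀) = 0 := by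
    intro q₀
    induction q₀ using Polynomial.induction_on with
    | C a =>
      rw [Polynomial.aeval_C, Derivation.map_algebraMap, smul_zero]
    | add q1 q2 hq1 hq2 =>
      rw [map_add, map_add, smul_add, hq1, hq2, add_zero]
    | monomial n a _ =>
      rw [map_mul, Polynomial.aeval_C, map_pow, Polynomial.aeval_X]
      rw [Derivation.leibniz, Derivation.map_algebraMap, smul_zero, add_zero]
      rw [Derivation.leibniz_pow]
      rw [← Nat.cast_smul_eq_nsmul OL]
      rw [smul_smul, smul_smul, smul_smul]
      have hcomm : c₀ * algebraMap OK OL a * (((n + 1 : ℕ) : OL)) * Sl ^ (n + 1 - 1)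
          = algebraMap OK OL a * (((n + 1 : ℕ) : OL)) * Sl ^ (n + 1 - 1) * c₀ := by ring
      rw [hcomm, ← smul_smul, hc0DSl, smul_zero]
  have hDzero : ∀ x : OL, c₀ • KaehlerDifferential.D OK OL x = 0 := by
    intro x
    -- lift rep x to OK[X]
    have hlift : ∃ x₀ : Polynomial OK, x₀.map (Subring.subtype OK) = rep (x : L) := by
      refine ⟨(rep (x : L)).toSubring OK ?_, Polynomial.map_toSubring _ OK _⟩
      intro c hc
      obtain ⟨n, _, rfl⟩ := Polynomial.mem_coeffs_iff.mp hc
      exact hrepcoeff _ x.2 n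
    obtain ⟨x₀, hx₀⟩ := hlift
    have hxeq : x = Polynomial.aeval Sl x₀ := by
      apply Subtype.ext
      have h1 : ((Polynomial.aeval Sl x₀ : OL) : L)
          = Polynomial.eval₂ ((Subring.subtype OL).comp (algebraMap OK OL)) S x₀ :=
        Polynomial.hom_eval₂ x₀ (algebraMap OK OL) (Subring.subtype OL) Sl
      have h2 : (Subring.subtype OL).comp (algebraMap OK OL)
          = (algebraMap K L).comp (Subring.subtype OK) := by
        ext a
        rfl
      rw [h1, h2, ← Polynomial.eval₂_map, hx₀, ← Polynomial.aeval_def, hrepval]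
    rw [hxeq]
    exact hpoly x₀
  have hc0ann : c₀ ∈ Module.annihilator OL (KaehlerDifferential OK OL) := by
    rw [Module.mem_annihilator]
    intro m
    have hm : m ∈ Submodule.span OL (Set.range (KaehlerDifferential.D OK OL)) := by
      rw [KaehlerDifferential.span_range_derivation]; trivial
    induction hm using Submodule.span_induction with
    | mem x hx =>
      obtain ⟨y, rfl⟩ := hx
      exact hDzero y
    | zero => exact smul_zero _
    | add x y hx hy ihx ihy => rw [smul_add, ihx, ihy, add_zero]
    | smul a x hx ih => rw [smul_comm, ih, smul_zero]
  have hc0w : w' ((c₀ : L)) = v ((p : ℕ) : Cp) := by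
    have h1 : (c₀ : L) = ((p : ℕ) : L) * S ^ (p - 1) := by
      rw [hc₀]
      push_cast
      rfl
    rw [h1, w'.map_mul, map_pow, hwS, one_pow, mul_one, hwp']
  -- conclude
  show sSup ((fun c : OL => w' (c : L)) ''
    ((Module.annihilator OL (KaehlerDifferential OK OL)) : Set OL)) = v (p : Cp)
  have hmem : v ((p : ℕ) : Cp) ∈ (fun c : OL => w' (c : L)) ''
      ((Module.annihilator OL (KaehlerDifferential OK OL)) : Set OL) :=
    ⟨c₀, hc0ann, hc0w⟩
  have hbdd : ∀ y ∈ (fun c : OL => w' (c : L)) ''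
      ((Module.annihilator OL (KaehlerDifferential OK OL)) : Set OL),
      y ≤ v ((p : ℕ) : Cp) := by
    rintro y ⟨c, hc, rfl⟩
    exact hub c hc
  exact le_antisymm (csSup_le ⟨_, hmem⟩ hbdd) (le_csSup ⟨_, hbdd⟩ hmem)
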